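/- Let c(n,m) be the number of increasing 1,2-trees on {1,…,n} with m edges. In the ring ℚ[[z,w]] of formal power series in two variables, define D := Σ_{n≥1} (z^n/n!) · Σ_m c(n,m) · (1+w)^(−m), where (1+w)^(−1) denotes the multiplicative inverse of 1+w in ℚ[[w]] (each inner sum is finite since c(n,m) = 0 for m > 2n−3). Let T(x) := Σ_{n≥1} n^(n−2) x^n/n! ∈ ℚ[[x]] be the exponential generating function of Cayley trees. Then D = T∘((z−w)·e^w) + w + w²/2, where T∘((z−w)·e^w) denotes the substitution of the two-variable power series (z−w)·e^w (which has zero constant term) into T. (This is the generating-function identity C(z,u) = T(((uz+u−1)/u)·e^((1−u)/u)) + 1/(2u²) − 1/2 after the substitution u = 1/(1+w).) -/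

import Mathlib

open SimpleGraph

/-- The set of neighbors of `v` having a smaller label. -/
def lowerNbrs {n : ℕ} (G : SimpleGraph (Fin n)) (v : Fin n) : Set (Fin n) :=
  {x | G.Adj v x ∧ x < v}

/-- `G` is an increasing 1,2-tree: every vertex other than the first one has a nonempty
set of smaller neighbors, of cardinality at most 2, forming a clique. -/
def IsIncreasing12Tree {n : ℕ} (G : SimpleGraph (Fin n)) : Prop :=
  ∀ v : Fin n, 1 ≤ v.val →
    (lowerNbrs G v).Nonempty ∧ (lowerNbrs G v).ncard ≤ 2 ∧
      ∀ x ∈ lowerNbrs G v, ∀ y ∈ lowerNbrs G v, x ≠ y → G.Adj x y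

/-- The set of vertices reachable from `v` after deleting the edge `{u,v}`
(in a tree, the vertex set of the subtree rooted at `v` when `v` is the child endpoint). -/
def subtreeSet {n : ℕ} (G : SimpleGraph (Fin n)) (u v : Fin n) : Set (Fin n) :=
  {w | (G.deleteEdges {s(u, v)}).Reachable v w}

/-- `v` is the child endpoint of the edge `{u,v}`: after deleting this edge,
`v` is no longer reachable from the root. -/
def IsChild {n : ℕ} (G : SimpleGraph (Fin n)) (root u v : Fin n) : Prop :=
  G.Adj u v ∧ ¬ (G.deleteEdges {s(u, v)}).Reachable root v

/-- The minimal label occurring in a set of vertices (labels being `Fin.val`). -/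
noncomputable def minLabel {n : ℕ} (S : Set (Fin n)) : ℕ := sInf (Fin.val '' S)

/-- An edge `{u,v}` with child endpoint `v` is a twist if the minimal label in the
subtree rooted at `v` is smaller than the label of `u`. -/
def IsTwist {n : ℕ} (G : SimpleGraph (Fin n)) (root : Fin n) (e : Sym2 (Fin n)) : Prop :=
  ∃ u v : Fin n, e = s(u, v) ∧ IsChild G root u v ∧ minLabel (subtreeSet G u v) < u.val

/-- An edge `{u,v}` with child endpoint `v` is increasing if the label of `u` is smaller
than every label in the subtree rooted at `v`. -/
def IsIncreasingEdge {n : ℕ} (G : SimpleGraph (Fin n)) (root : Fin n) (e : Sym2 (Fin n)) : Prop :=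
  ∃ u v : Fin n, e = s(u, v) ∧ IsChild G root u v ∧ u.val < minLabel (subtreeSet G u v)

/-- The number of twists of `G` (with respect to the given root). -/
noncomputable def numTwists {n : ℕ} (G : SimpleGraph (Fin n)) (root : Fin n) : ℕ :=
  Nat.card {e : Sym2 (Fin n) // e ∈ G.edgeSet ∧ IsTwist G root e}

/-- The number of increasing 1,2-trees on `n` vertices with `m` edges. -/
noncomputable def numInc12Trees (n m : ℕ) : ℕ :=
  Nat.card {G : SimpleGraph (Fin n) // IsIncreasing12Tree G ∧ G.edgeSet.ncard = m}

/-- The number of Cayley trees on `n ≥ 1` vertices (rooted at the vertex with label 1)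
with exactly `j` twists. -/
noncomputable def numCayleyTwist (n j : ℕ) (h : 0 < n) : ℕ :=
  Nat.card {G : SimpleGraph (Fin n) // G.IsTree ∧ numTwists G ⟨0, h⟩ = j}

/-- The exponential generating function of Cayley trees, `T(x) = Σ_{n≥1} n^(n-2) xⁿ/n!`. -/
noncomputable def cayleyEgf : PowerSeries ℚ :=
  PowerSeries.mk fun n => if n = 0 then 0 else (n : ℚ) ^ (n - 2) / (n.factorial : ℚ)

/-- We regard `ℚ[[z,w]]` as `(ℚ[[w]])[[z]]` (the outer variable is `z`, the inner one `w`).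
`substBivar T g` is the substitution `T ∘ g = Σ_n coeff_n(T)·gⁿ` of a bivariate series `g`
into a univariate series `T`, computed coefficientwise; for a series `g` whose monomials all
have total degree at least 1 in `(z,w)` (as is the case below), the coefficient of `zʲwᵏ`
in `gⁿ` vanishes as soon as `n > j + k`, so the defining sum is finite. -/
noncomputable def substBivar (T : PowerSeries ℚ) (g : PowerSeries (PowerSeries ℚ)) :
    PowerSeries (PowerSeries ℚ) :=
  PowerSeries.mk fun j => PowerSeries.mk fun k =>
    ∑ n ∈ Finset.range (j + k + 1),
      PowerSeries.coeff (R := ℚ) n T *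
        PowerSeries.coeff (R := ℚ) k (PowerSeries.coeff (R := PowerSeries ℚ) j (g ^ n))

/-- The series `D = Σ_{n≥1} (zⁿ/n!)·Σ_m c(n,m)·(1+w)^(-m)`, where `c(n,m)` is the number of
increasing 1,2-trees with `n` vertices and `m` edges (the inner sum is finite since
`c(n,m) = 0` for `m > 2n-3`, so we may restrict it to `m < 2n`). -/
noncomputable def Dser : PowerSeries (PowerSeries ℚ) :=
  PowerSeries.mk fun n =>
    if n = 0 then 0 else
      PowerSeries.C (R := ℚ) ((n.factorial : ℚ))⁻¹ *
        ∑ m ∈ Finset.range (2 * n),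
          PowerSeries.C (R := ℚ) (numInc12Trees n m : ℚ) * ((1 + PowerSeries.X)⁻¹) ^ m

/-- The bivariate series `(z - w)·e^w ∈ ℚ[[z,w]]`. -/
noncomputable def gSub : PowerSeries (PowerSeries ℚ) :=
  (PowerSeries.X - PowerSeries.C (R := PowerSeries ℚ) PowerSeries.X) *
    PowerSeries.C (R := PowerSeries ℚ) (PowerSeries.exp ℚ)

open PowerSeries Finset fwdDiff


private lemma fd_pow_zero : ∀ (d n : ℕ), d < n → (Δ_[1])^[n] (fun k : ℕ => (k:ℚ)^d) = 0 := by
  intro d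
  induction d using Nat.strong_induction_on with
  | _ d IH =>
    intro n hn
    obtain ⟨n, rfl⟩ : ∃ m, n = m + 1 := ⟨n-1, by omega⟩
    rw [Function.iterate_succ_apply]
    have hΔ : Δ_[1] (fun k : ℕ => (k:ℚ)^d) =
        ∑ i ∈ range d, fun k : ℕ => (d.choose i : ℚ) * (k:ℚ)^i := by
      funext k
      simp only [fwdDiff, Finset.sum_apply]
      have : ((k:ℚ)+1)^d = ∑ i ∈ range (d+1), (k:ℚ)^i * (d.choose i) := by
        rw [add_pow]; exact Finset.sum_congr rfl (by intro i hi; ring)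
      push_cast
      rw [this, Finset.sum_range_succ, Nat.choose_self]
      push_cast
      rw [mul_one, add_sub_cancel_right]
      exact Finset.sum_congr rfl (by intro i hi; ring)
    rw [hΔ, fwdDiff_iter_finset_sum]
    have : ∀ i ∈ range d, (Δ_[1])^[n] (fun k : ℕ => (d.choose i : ℚ) * (k:ℚ)^i) = 0 := by
      intro i hi
      have hid := mem_range.mp hi
      have h1 : (fun k : ℕ => (d.choose i : ℚ) * (k:ℚ)^i) =
          (d.choose i : ℚ) • (fun k : ℕ => (k:ℚ)^i) := by funext k; simp [mul_comm]
      rw [h1, fwdDiff_iter_const_smul, IH i hid n (by omega), smul_zero]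
    rw [Finset.sum_congr rfl this]
    simp

lemma alt_sum_choose_pow (d n : ℕ) (hd : d < n) :
    ∑ k ∈ range (n+1), (-1:ℚ)^k * (n.choose k) * (k:ℚ)^d = 0 := by
  have h := fwdDiff_iter_eq_sum_shift (1 : ℕ) (fun k : ℕ => (k:ℚ)^d) n 0
  rw [fd_pow_zero d n hd] at h
  have h2 : ∑ k ∈ range (n+1), (-1:ℚ)^(n-k) * (n.choose k) * (k:ℚ)^d = 0 := by
    simpa using h.symm
  have h3 : ∀ k ∈ range (n+1), (-1:ℚ)^k * (n.choose k) * (k:ℚ)^d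
      = (-1:ℚ)^n * ((-1:ℚ)^(n-k) * (n.choose k) * (k:ℚ)^d) := by
    intro k hk
    have hkn : k ≤ n := Nat.lt_succ_iff.mp (mem_range.mp hk)
    have hpow : (-1:ℚ)^n = (-1:ℚ)^k * (-1:ℚ)^(n-k) := by
      rw [← pow_add]; congr 1; omega
    have h4 : (-1:ℚ)^(n-k)*(-1:ℚ)^(n-k) = 1 := by
      rw [← pow_add]; exact Even.neg_one_pow ⟨n-k, rfl⟩
    rw [hpow]
    linear_combination (-((-1:ℚ)^k * (n.choose k) * (k:ℚ)^d)) * h4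
  rw [Finset.sum_congr rfl h3, ← Finset.mul_sum, h2, mul_zero]



noncomputable def Pnk (n k : ℕ) : PowerSeries ℚ :=
  (k.choose n : ℚ) • ((PowerSeries.exp ℚ ^ k) * (-PowerSeries.X)^(k-n))

lemma coeff_gSub_pow (k n : ℕ) :
    PowerSeries.coeff (R := PowerSeries ℚ) n (gSub ^ k) = Pnk n k := by
  have h1 : gSub ^ k = (X + C (R := PowerSeries ℚ) (-X)) ^ k * C (R := PowerSeries ℚ) (exp ℚ ^ k) := by
    rw [gSub, mul_pow, map_pow, map_neg, sub_eq_add_neg]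
  rw [h1, add_pow, Finset.sum_mul, map_sum]
  have h2 : ∀ j ∈ range (k+1),
      (coeff (R := PowerSeries ℚ) n) (X ^ j * C (R := PowerSeries ℚ) (-X) ^ (k - j) * (k.choose j : PowerSeries (PowerSeries ℚ)) * C (R := PowerSeries ℚ) (exp ℚ ^ k))
      = if n = j then (k.choose j : ℚ) • ((exp ℚ ^ k) * (-X)^(k-j)) else 0 := by
    intro j hj
    have : X ^ j * C (R := PowerSeries ℚ) (-X) ^ (k - j) * (k.choose j : PowerSeries (PowerSeries ℚ)) * C (R := PowerSeries ℚ) (exp ℚ ^ k)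
        = C (R := PowerSeries ℚ) ((k.choose j : ℚ) • ((exp ℚ ^ k) * (-X)^(k-j))) * X ^ j := by
      simp only [smul_eq_C_mul, map_mul, map_pow, map_neg, map_natCast, map_one]
      ring
    rw [this, coeff_C_mul, coeff_X_pow]
    split <;> simp
  rw [Finset.sum_congr rfl h2, Finset.sum_ite_eq (range (k+1)) n]
  by_cases hn : n ∈ range (k+1)
  · rw [if_pos hn, Pnk]
  · rw [if_neg hn, Pnk]
    have : k.choose n = 0 := Nat.choose_eq_zero_of_lt (by simpa using hn)
    simp [this]

lemma coeff_Pnk_eq_zero {n k i : ℕ} (h : n + i < k) :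
    PowerSeries.coeff (R := ℚ) i (Pnk n k) = 0 := by
  rw [Pnk, neg_pow, ← mul_assoc, map_smul, coeff_mul_X_pow', if_neg (by omega), smul_zero]

lemma d_exp : d⁄dX ℚ (exp ℚ) = exp ℚ := by
  ext i
  rw [coeff_derivative, coeff_exp, coeff_exp]
  simp only [algebraMap, Algebra.algebraMap_self, RingHom.id_apply]
  rw [Nat.factorial_succ]
  have h1 : ((i.factorial : ℚ)) ≠ 0 := by exact_mod_cast Nat.factorial_ne_zero i
  have h2 : ((i:ℚ)+1) ≠ 0 := by positivity
  field_simp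
  push_cast; ring

lemma d_exp_pow (k : ℕ) : d⁄dX ℚ (exp ℚ ^ k) = (k:ℚ) • (exp ℚ ^ k) := by
  cases k with
  | zero => simp
  | succ k =>
    rw [Derivation.leibniz_pow, d_exp, Nat.add_sub_cancel, smul_eq_mul, ← pow_succ,
      ← Nat.cast_smul_eq_nsmul ℚ]

lemma keyk (n k : ℕ) :
    (1 + X) * (((n:ℚ)+1) • Pnk (n+1) k) = (n:ℚ) • Pnk n k - d⁄dX ℚ (Pnk n k) := by
  rcases lt_or_ge k (n+1) with hk | hk
  · rcases Nat.lt_succ_iff_lt_or_eq.mp hk with hk' | rfl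
    · have h1 : k.choose n = 0 := Nat.choose_eq_zero_of_lt hk'
      have h2 : k.choose (n+1) = 0 := Nat.choose_eq_zero_of_lt (by omega)
      simp [Pnk, h1, h2]
    · have h2 : k.choose (k+1) = 0 := Nat.choose_eq_zero_of_lt (by omega)
      have h3 : Pnk k k = exp ℚ ^ k := by simp [Pnk]
      rw [h3, d_exp_pow]
      simp [Pnk, h2]
  · obtain ⟨j, rfl⟩ : ∃ j, k = n + 1 + j := ⟨k - n - 1, by omega⟩
    have e1 : n + 1 + j - n = j + 1 := by omega
    have e2 : n + 1 + j - (n + 1) = j := by omega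
    have hc : ((n:ℚ)+1) * ((n+1+j).choose (n+1) : ℚ) = ((j:ℚ)+1) * ((n+1+j).choose n : ℚ) := by
      have h := congrArg (Nat.cast : ℕ → ℚ) (Nat.choose_succ_right_eq (n+1+j) n)
      rw [e1] at h
      push_cast at h
      linarith
    rw [Pnk, Pnk, e1, e2, Derivation.map_smul, Derivation.leibniz, Derivation.leibniz_pow,
      d_exp_pow, map_neg, derivative_X, Nat.add_sub_cancel]
    have hcC := congrArg (C (R := ℚ)) hc
    simp only [map_mul, map_add, map_one] at hcC
    simp only [smul_eq_mul, ← Nat.cast_smul_eq_nsmul ℚ, smul_eq_C_mul]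
    push_cast
    simp only [map_mul, map_add, map_one]
    linear_combination (exp ℚ ^ (n+1+j) * (-X)^j * (1+X)) * hcC


noncomputable def Bn (n : ℕ) : PowerSeries ℚ :=
  PowerSeries.coeff (R := PowerSeries ℚ) n (substBivar cayleyEgf gSub)

lemma coeff_Bn (n i : ℕ) : coeff (R := ℚ) i (Bn n) =
    ∑ k ∈ range (n+i+1), coeff (R := ℚ) k cayleyEgf * coeff (R := ℚ) i (Pnk n k) := by
  simp only [Bn, substBivar, coeff_mk, coeff_gSub_pow]

lemma coeff_Bn_ext (n i N : ℕ) (hN : n + i + 1 ≤ N) : coeff (R := ℚ) i (Bn n) =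
    ∑ k ∈ range N, coeff (R := ℚ) k cayleyEgf * coeff (R := ℚ) i (Pnk n k) := by
  rw [coeff_Bn]
  apply Finset.sum_subset (Finset.range_subset_range.mpr hN)
  intro k hk hk2
  simp only [mem_range] at hk hk2
  rw [coeff_Pnk_eq_zero (by omega), mul_zero]

lemma coeff_mul_congr {i : ℕ} (a : PowerSeries ℚ) {f g : PowerSeries ℚ}
    (h : ∀ j ≤ i, coeff (R := ℚ) j f = coeff (R := ℚ) j g) :
    coeff (R := ℚ) i (a * f) = coeff (R := ℚ) i (a * g) := by
  rw [coeff_mul, coeff_mul]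
  refine Finset.sum_congr rfl fun p hp => ?_
  have hp2 : p.1 + p.2 = i := Finset.HasAntidiagonal.mem_antidiagonal.mp hp
  rw [h p.2 (by omega)]

lemma Brec (n : ℕ) :
    (1 + X) * (((n:ℚ)+1) • Bn (n+1)) = (n:ℚ) • Bn n - d⁄dX ℚ (Bn n) := by
  ext i
  set N := n + i + 3 with hN
  set F : PowerSeries ℚ := ∑ k ∈ range N, coeff (R := ℚ) k cayleyEgf • Pnk n k with hF
  set G : PowerSeries ℚ := ∑ k ∈ range N, coeff (R := ℚ) k cayleyEgf • Pnk (n+1) k with hG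
  have hsum : (1 + X) * (((n:ℚ)+1) • G) = (n:ℚ) • F - d⁄dX ℚ F := by
    rw [hF, hG, Finset.smul_sum, Finset.mul_sum, Finset.smul_sum, map_sum, ← Finset.sum_sub_distrib]
    refine Finset.sum_congr rfl fun k _ => ?_
    rw [smul_comm ((n:ℚ)+1), mul_smul_comm, keyk n k, smul_sub, smul_comm, Derivation.map_smul]
  have hcoeffG : ∀ j, j ≤ i + 1 → coeff (R := ℚ) j (Bn (n+1)) = coeff (R := ℚ) j G := by
    intro j hj
    rw [coeff_Bn_ext (n+1) j N (by omega), hG, map_sum]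
    simp only [map_smul, smul_eq_mul]
  have hcoeffF : ∀ j, j ≤ i + 1 → coeff (R := ℚ) j (Bn n) = coeff (R := ℚ) j F := by
    intro j hj
    rw [coeff_Bn_ext n j N (by omega), hF, map_sum]
    simp only [map_smul, smul_eq_mul]
  have hL : coeff (R := ℚ) i ((1 + X) * (((n:ℚ)+1) • Bn (n+1))) =
      coeff (R := ℚ) i ((1 + X) * (((n:ℚ)+1) • G)) := by
    apply coeff_mul_congr
    intro j hj
    rw [map_smul, map_smul, hcoeffG j (by omega)]
  rw [hL, hsum, map_sub, map_sub, map_smul, map_smul, hcoeffF i (by omega),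
    coeff_derivative, coeff_derivative, hcoeffF (i+1) (by omega)]

lemma coeff_exp_pow (k i : ℕ) : coeff (R := ℚ) i (exp ℚ ^ k) = (k:ℚ)^i / i.factorial := by
  rw [exp_pow_eq_rescale_exp, coeff_rescale, coeff_exp]
  simp [algebraMap]
  ring

lemma coeff_Pnk (n k i : ℕ) (h : k - n ≤ i) :
    coeff (R := ℚ) i (Pnk n k) =
      (k.choose n : ℚ) * ((-1:ℚ)^(k-n) * ((k:ℚ)^(i-(k-n)) / (i-(k-n)).factorial)) := by
  have hC : ((-1 : PowerSeries ℚ))^(k-n) = C (R := ℚ) ((-1:ℚ)^(k-n)) := by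
    rw [map_pow, map_neg, map_one]
  rw [Pnk, map_smul, neg_pow, ← mul_assoc, coeff_mul_X_pow', if_pos h, hC, mul_comm _ (C (R := ℚ) _),
    coeff_C_mul, coeff_exp_pow, smul_eq_mul]

lemma coeff_Tk (k : ℕ) : coeff (R := ℚ) k cayleyEgf
    = if k = 0 then 0 else (k : ℚ) ^ (k - 2) / (k.factorial : ℚ) := by
  rw [cayleyEgf, coeff_mk]

lemma fact_cast_ne (k : ℕ) : ((k.factorial : ℚ)) ≠ 0 := by
  exact_mod_cast Nat.factorial_ne_zero k

lemma choose_cast_eq (k m : ℕ) (hkm : k ≤ m) :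
    (m.choose k : ℚ) = (m.factorial : ℚ) / ((k.factorial : ℚ) * ((m-k).factorial : ℚ)) := by
  have h0 := Nat.choose_mul_factorial_mul_factorial hkm
  have h1 : ((m.choose k : ℚ)) * (k.factorial : ℚ) * ((m-k).factorial : ℚ) = (m.factorial : ℚ) := by
    exact_mod_cast congrArg (Nat.cast : ℕ → ℚ) h0
  rw [eq_div_iff (mul_ne_zero (fact_cast_ne k) (fact_cast_ne (m-k)))]
  linear_combination h1

lemma B0_eq : Bn 0 = -(X + C (R := ℚ) (1/2) * X^2) := by
  ext i
  rw [coeff_Bn]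
  have hrhs : ∀ j : ℕ, coeff (R := ℚ) j (-(X + C (R := ℚ) (1/2) * X^2))
      = -((if j = 1 then (1:ℚ) else 0) + (1/2) * (if j = 2 then (1:ℚ) else 0)) := by
    intro j
    rw [map_neg, map_add, coeff_C_mul, coeff_X, coeff_X_pow]
  rw [hrhs]
  rcases i with _|_|_|i
  · simp [coeff_Tk]
  · rw [Finset.sum_range_succ, Finset.sum_range_succ, Finset.sum_range_zero, coeff_Tk, coeff_Tk,
      coeff_Pnk 0 1 1 (by norm_num)]
    norm_num [Nat.factorial]
  · rw [Finset.sum_range_succ, Finset.sum_range_succ, Finset.sum_range_succ, Finset.sum_range_zero,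
      coeff_Tk, coeff_Tk, coeff_Tk, coeff_Pnk 0 1 2 (by norm_num), coeff_Pnk 0 2 2 (by norm_num)]
    norm_num [Nat.factorial]
  · set m := i + 3 with hm
    have hterm : ∀ k ∈ range (0+m+1), coeff (R := ℚ) k cayleyEgf * coeff (R := ℚ) m (Pnk 0 k)
        = (1/(m.factorial:ℚ)) * ((-1:ℚ)^k * (m.choose k) * (k:ℚ)^(m-2)) := by
      intro k hk
      simp only [mem_range] at hk
      have hkm : k ≤ m := by omega
      rcases Nat.eq_zero_or_pos k with rfl | hk1
      · have : ((0:ℕ):ℚ)^(m-2) = 0 := by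
          rw [Nat.cast_zero]
          exact zero_pow (by omega)
        rw [coeff_Tk, if_pos rfl, zero_mul, this, mul_zero, mul_zero]
      · rw [coeff_Tk, if_neg (by omega), coeff_Pnk 0 k m (by omega), Nat.sub_zero,
          Nat.choose_zero_right, Nat.cast_one, choose_cast_eq k m hkm]
        have hpow : (k:ℚ)^(k-2) * (k:ℚ)^(m-k) = (k:ℚ)^(m-2) := by
          rcases Nat.lt_or_ge k 2 with hk2 | hk2
          · interval_cases k
            · simp
          · rw [← pow_add]
            congr 1
            omega
        field_simp
        linear_combination hpow
    rw [Finset.sum_congr rfl hterm, ← Finset.mul_sum]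
    have halt := alt_sum_choose_pow (m-2) m (by omega)
    have heq : ∑ k ∈ range (0+m+1), (-1:ℚ)^k * (m.choose k) * (k:ℚ)^(m-2)
        = ∑ k ∈ range (m+1), (-1:ℚ)^k * (m.choose k) * (k:ℚ)^(m-2) := by norm_num
    rw [heq, halt, mul_zero]
    rw [if_neg (by omega), if_neg (by omega)]
    norm_num

lemma B1_eq : Bn 1 = 1 := by
  ext i
  rw [coeff_Bn, coeff_one]
  rcases Nat.eq_zero_or_pos i with rfl | hi
  · rw [Finset.sum_range_succ, Finset.sum_range_succ, Finset.sum_range_zero, coeff_Tk, coeff_Tk,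
      coeff_Pnk 1 1 0 (by norm_num)]
    norm_num
  · have hterm : ∀ k ∈ range (1+i+1), coeff (R := ℚ) k cayleyEgf * coeff (R := ℚ) i (Pnk 1 k)
        = (-(1/(((i+1).factorial:ℚ)))) * ((-1:ℚ)^k * ((i+1).choose k) * (k:ℚ)^i) := by
      intro k hk
      simp only [mem_range] at hk
      have hkm : k ≤ i + 1 := by omega
      rcases Nat.eq_zero_or_pos k with rfl | hk1
      · have : ((0:ℕ):ℚ)^i = 0 := by
          rw [Nat.cast_zero]
          exact zero_pow (by omega)
        rw [coeff_Tk, if_pos rfl, zero_mul, this, mul_zero, mul_zero]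
      · rw [coeff_Tk, if_neg (by omega), coeff_Pnk 1 k i (by omega), Nat.choose_one_right,
          choose_cast_eq k (i+1) hkm]
        have he1 : i - (k - 1) = i + 1 - k := by omega
        have hsign : ((-1:ℚ))^k = -((-1:ℚ)^(k-1)) := by
          conv_lhs => rw [show k = (k-1)+1 by omega]
          rw [pow_succ]
          ring
        have hpow : (k:ℚ)^(k-2) * ((k:ℚ) * (k:ℚ)^(i+1-k)) = (k:ℚ)^i := by
          rcases Nat.lt_or_ge k 2 with hk2 | hk2
          · interval_cases k
            · simp
          · rw [← pow_succ', ← pow_add]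
            congr 1
            omega
        rw [he1, hsign]
        field_simp
        linear_combination hpow
    rw [Finset.sum_congr rfl hterm, ← Finset.mul_sum]
    have halt := alt_sum_choose_pow i (i+1) (by omega)
    have heq : ∑ k ∈ range (1+i+1), (-1:ℚ)^k * ((i+1).choose k) * (k:ℚ)^i
        = ∑ k ∈ range ((i+1)+1), (-1:ℚ)^k * ((i+1).choose k) * (k:ℚ)^i := by
      rw [show 1+i+1 = (i+1)+1 by omega]
    rw [heq, halt, mul_zero, if_neg (by omega)]



section Ext

variable {n : ℕ}

/-- Extend a graph on `Fin n` by a new largest vertex joined to `castSucc '' S`. -/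
def extG (G' : SimpleGraph (Fin n)) (S : Set (Fin n)) : SimpleGraph (Fin (n+1)) :=
  G'.map Fin.castSuccEmb ⊔ SimpleGraph.fromEdgeSet ((fun v => s(Fin.last n, v.castSucc)) '' S)

def resG (G : SimpleGraph (Fin (n+1))) : SimpleGraph (Fin n) := G.comap Fin.castSucc

lemma cs_ne_last (v : Fin n) : v.castSucc ≠ Fin.last n := (Fin.castSucc_lt_last v).ne

lemma castSuccEmb_apply (v : Fin n) : (Fin.castSuccEmb : Fin n ↪ Fin (n+1)) v = v.castSucc := rfl

lemma extG_adj_cs {G' : SimpleGraph (Fin n)} {S : Set (Fin n)} (a b : Fin n) :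
    (extG G' S).Adj a.castSucc b.castSucc ↔ G'.Adj a b := by
  simp only [extG, sup_adj, SimpleGraph.map_adj, fromEdgeSet_adj, Set.mem_image]
  constructor
  · rintro (⟨u, v, huv, hu, hv⟩ | ⟨⟨v, hv, he⟩, hne⟩)
    · rw [castSuccEmb_apply] at hu hv
      rw [← Fin.castSucc_inj.mp hu, ← Fin.castSucc_inj.mp hv]
      exact huv
    · exfalso
      rw [Sym2.eq_iff] at he
      rcases he with ⟨h1, _⟩ | ⟨h1, _⟩
      · exact cs_ne_last a h1.symm
      · exact cs_ne_last b h1.symm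
  · intro h
    exact Or.inl ⟨a, b, h, rfl, rfl⟩

lemma extG_adj_last {G' : SimpleGraph (Fin n)} {S : Set (Fin n)} (b : Fin n) :
    (extG G' S).Adj (Fin.last n) b.castSucc ↔ b ∈ S := by
  simp only [extG, sup_adj, SimpleGraph.map_adj, fromEdgeSet_adj, Set.mem_image]
  constructor
  · rintro (⟨u, v, huv, hu, hv⟩ | ⟨⟨v, hv, he⟩, hne⟩)
    · exact absurd hu (cs_ne_last u)
    · rw [Sym2.eq_iff] at he
      rcases he with ⟨_, h2⟩ | ⟨h1, _⟩
      · rwa [← Fin.castSucc_inj.mp h2]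
      · exact absurd h1.symm (cs_ne_last b)
  · intro hb
    exact Or.inr ⟨⟨b, hb, rfl⟩, Ne.symm (cs_ne_last b)⟩

lemma fin_cases' (x : Fin (n+1)) : x = Fin.last n ∨ ∃ v : Fin n, x = v.castSucc := by
  rcases eq_or_ne x (Fin.last n) with h | h
  · exact Or.inl h
  · obtain ⟨v, hv⟩ := Fin.exists_castSucc_eq.mpr h
    exact Or.inr ⟨v, hv.symm⟩

lemma lt_last_of_ne {x : Fin (n+1)} (h : x ≠ Fin.last n) : x < Fin.last n := by
  rcases fin_cases' x with rfl | ⟨v, rfl⟩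
  · exact absurd rfl h
  · exact Fin.castSucc_lt_last v

/-- Lower neighbours of the last vertex of `extG`. -/
lemma lowerNbrs_extG_last {G' : SimpleGraph (Fin n)} {S : Set (Fin n)} :
    lowerNbrs (extG G' S) (Fin.last n) = Fin.castSucc '' S := by
  ext x
  simp only [lowerNbrs, Set.mem_setOf_eq, Set.mem_image]
  constructor
  · rintro ⟨hadj, hlt⟩
    rcases fin_cases' x with rfl | ⟨v, rfl⟩
    · exact absurd rfl hlt.ne
    · exact ⟨v, (extG_adj_last v).mp hadj, rfl⟩
  · rintro ⟨v, hv, rfl⟩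
    exact ⟨(extG_adj_last v).mpr hv, Fin.castSucc_lt_last v⟩

/-- Lower neighbours of any vertex of the form `castSucc v` in an arbitrary graph on
`Fin (n+1)` are the (castSucc image of) lower neighbours of `v` in the restriction. -/
lemma lowerNbrs_cs {G : SimpleGraph (Fin (n+1))} (v : Fin n) :
    lowerNbrs G v.castSucc = Fin.castSucc '' lowerNbrs (resG G) v := by
  ext x
  simp only [lowerNbrs, Set.mem_setOf_eq, Set.mem_image, resG, comap_adj]
  constructor
  · rintro ⟨hadj, hlt⟩
    have hx : x ≠ Fin.last n := by
      intro h
      exact absurd (hlt.trans (Fin.castSucc_lt_last v)) (by rw [h]; exact lt_irrefl _)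
    rcases fin_cases' x with rfl | ⟨u, rfl⟩
    · exact absurd rfl hx
    · exact ⟨u, ⟨hadj, Fin.castSucc_lt_castSucc_iff.mp hlt⟩, rfl⟩
  · rintro ⟨u, ⟨hadj, hlt⟩, rfl⟩
    exact ⟨hadj, Fin.castSucc_lt_castSucc_iff.mpr hlt⟩

lemma resG_extG {G' : SimpleGraph (Fin n)} {S : Set (Fin n)} : resG (extG G' S) = G' := by
  ext a b
  rw [resG, comap_adj]
  exact extG_adj_cs a b

lemma extG_resG (G : SimpleGraph (Fin (n+1))) :
    G = extG (resG G) {v : Fin n | G.Adj (Fin.last n) v.castSucc} := by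
  ext a b
  constructor
  · intro hadj
    rcases fin_cases' a with rfl | ⟨u, rfl⟩
    · rcases fin_cases' b with rfl | ⟨w, rfl⟩
      · exact absurd rfl (G.ne_of_adj hadj)
      · exact (extG_adj_last w).mpr hadj
    · rcases fin_cases' b with rfl | ⟨w, rfl⟩
      · exact ((extG_adj_last u).mpr hadj.symm).symm
      · exact (extG_adj_cs u w).mpr hadj
  · intro hadj
    rcases fin_cases' a with rfl | ⟨u, rfl⟩
    · rcases fin_cases' b with rfl | ⟨w, rfl⟩
      · exact absurd rfl ((extG _ _).ne_of_adj hadj)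
      · exact (extG_adj_last w).mp hadj
    · rcases fin_cases' b with rfl | ⟨w, rfl⟩
      · exact ((extG_adj_last u).mp hadj.symm).symm
      · exact (extG_adj_cs u w).mp hadj

lemma P_resG {G : SimpleGraph (Fin (n+1))} (hP : IsIncreasing12Tree G) :
    IsIncreasing12Tree (resG G) := by
  intro v hv
  have hv' : 1 ≤ (v.castSucc : Fin (n+1)).val := by simpa using hv
  obtain ⟨h1, h2, h3⟩ := hP v.castSucc hv'
  rw [lowerNbrs_cs] at h1 h2 h3
  refine ⟨?_, ?_, ?_⟩
  · obtain ⟨x, u, hu, rfl⟩ := h1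
    exact ⟨u, hu⟩
  · rwa [Set.ncard_image_of_injective _ (Fin.castSucc_injective n)] at h2
  · intro x hx y hy hxy
    have := h3 _ ⟨x, hx, rfl⟩ _ ⟨y, hy, rfl⟩ (by simpa [Fin.castSucc_inj] using hxy)
    exact this

lemma P_extG {G' : SimpleGraph (Fin n)} {S : Set (Fin n)} (hn : 1 ≤ n)
    (hP : IsIncreasing12Tree G') (hS1 : S.Nonempty) (hS2 : S.ncard ≤ 2)
    (hS3 : ∀ x ∈ S, ∀ y ∈ S, x ≠ y → G'.Adj x y) :
    IsIncreasing12Tree (extG G' S) := by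
  intro v hv
  rcases fin_cases' v with rfl | ⟨u, rfl⟩
  · rw [lowerNbrs_extG_last]
    refine ⟨hS1.image _, ?_, ?_⟩
    · rwa [Set.ncard_image_of_injective _ (Fin.castSucc_injective n)]
    · rintro x ⟨a, ha, rfl⟩ y ⟨b, hb, rfl⟩ hxy
      exact (extG_adj_cs a b).mpr (hS3 a ha b hb (by simpa [Fin.castSucc_inj] using hxy))
  · have hu : 1 ≤ u.val := by simpa using hv
    obtain ⟨h1, h2, h3⟩ := hP u hu
    rw [lowerNbrs_cs, resG_extG]
    refine ⟨h1.image _, ?_, ?_⟩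
    · rwa [Set.ncard_image_of_injective _ (Fin.castSucc_injective n)]
    · rintro x ⟨a, ha, rfl⟩ y ⟨b, hb, rfl⟩ hxy
      exact (extG_adj_cs a b).mpr (h3 a ha b hb (by simpa [Fin.castSucc_inj] using hxy))

lemma edgeSet_map' (G' : SimpleGraph (Fin n)) :
    (G'.map (Fin.castSuccEmb : Fin n ↪ Fin (n+1))).edgeSet
      = Sym2.map Fin.castSucc '' G'.edgeSet := by
  ext e
  induction e using Sym2.ind with
  | _ a b =>
    simp only [mem_edgeSet, SimpleGraph.map_adj, Set.mem_image]
    constructor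
    · rintro ⟨u, v, huv, hu, hv⟩
      refine ⟨s(u, v), huv, ?_⟩
      rw [Sym2.map_pair_eq, castSuccEmb_apply] at *
      rw [hu, hv]
    · rintro ⟨e', he', hme⟩
      induction e' using Sym2.ind with
      | _ u v =>
        rw [Sym2.map_pair_eq] at hme
        rw [Sym2.eq_iff] at hme
        rcases hme with ⟨h1, h2⟩ | ⟨h1, h2⟩
        · exact ⟨u, v, he', h1, h2⟩
        · exact ⟨v, u, (mem_edgeSet _).mp he' |>.symm, h2, h1⟩

lemma edgeSet_extG (G' : SimpleGraph (Fin n)) (S : Set (Fin n)) :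
    (extG G' S).edgeSet = (Sym2.map Fin.castSucc '' G'.edgeSet)
      ∪ ((fun v => s(Fin.last n, v.castSucc)) '' S) := by
  rw [extG, edgeSet_sup, edgeSet_fromEdgeSet, edgeSet_map']
  congr 1
  ext e
  constructor
  · rintro ⟨he, _⟩
    exact he
  · intro he
    refine ⟨he, ?_⟩
    obtain ⟨v, hv, rfl⟩ := he
    intro hdiag
    exact Ne.symm (cs_ne_last v) (Sym2.mk_isDiag_iff.mp hdiag)

lemma ncard_edgeSet_extG (G' : SimpleGraph (Fin n)) (S : Set (Fin n)) :
    (extG G' S).edgeSet.ncard = G'.edgeSet.ncard + S.ncard := by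
  rw [edgeSet_extG]
  have hdisj : Disjoint (Sym2.map Fin.castSucc '' G'.edgeSet)
      ((fun v => s(Fin.last n, v.castSucc)) '' S) := by
    rw [Set.disjoint_left]
    rintro e ⟨e', he', rfl⟩ ⟨v, hv, hev⟩
    induction e' using Sym2.ind with
    | _ a b =>
      rw [Sym2.map_pair_eq, Sym2.eq_iff] at hev
      rcases hev with ⟨h1, _⟩ | ⟨h1, _⟩
      · exact cs_ne_last a h1.symm
      · exact cs_ne_last b h1.symm
  rw [Set.ncard_union_eq hdisj (Set.toFinite _) (Set.toFinite _)]
  congr 1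
  · exact Set.ncard_image_of_injective _ (Sym2.map.injective (Fin.castSucc_injective n))
  · apply Set.ncard_image_of_injective
    intro a b hab
    simp only [Sym2.eq_iff] at hab
    rcases hab with ⟨_, h2⟩ | ⟨h1, _⟩
    · exact Fin.castSucc_inj.mp h2
    · exact absurd h1.symm (cs_ne_last b)

lemma extG_S_recover (G' : SimpleGraph (Fin n)) (S : Set (Fin n)) :
    {v : Fin n | (extG G' S).Adj (Fin.last n) v.castSucc} = S := by
  ext v
  exact extG_adj_last v

lemma edge_mem_facts {G' : SimpleGraph (Fin n)} {e : Sym2 (Fin n)} (he : e ∈ G'.edgeSet) :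
    {v | v ∈ e}.Nonempty ∧ {v | v ∈ e}.ncard = 2 ∧
      (∀ x ∈ {v | v ∈ e}, ∀ y ∈ {v | v ∈ e}, x ≠ y → G'.Adj x y) := by
  induction e using Sym2.ind with
  | _ a b =>
    have hadj : G'.Adj a b := he
    have hne : a ≠ b := G'.ne_of_adj hadj
    have hset : {v | v ∈ s(a,b)} = ({a, b} : Set (Fin n)) := by
      ext v
      simp [Sym2.mem_iff]
    rw [hset]
    refine ⟨⟨a, by simp⟩, Set.ncard_pair hne, ?_⟩
    intro x hx y hy hxy
    rcases hx with rfl | hx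
    · rcases hy with rfl | hy
      · exact absurd rfl hxy
      · rw [Set.mem_singleton_iff] at hy
        subst hy
        exact hadj
    · rw [Set.mem_singleton_iff] at hx
      subst hx
      rcases hy with rfl | hy
      · exact hadj.symm
      · rw [Set.mem_singleton_iff] at hy
        subst hy
        exact absurd rfl hxy

lemma sym2_eq_of_set_eq {e e' : Sym2 (Fin n)} (hd : ¬ e.IsDiag)
    (h : {v | v ∈ e} = {v | v ∈ e'}) : e = e' := by
  induction e using Sym2.ind with
  | _ a b =>
    induction e' using Sym2.ind with
    | _ c d =>
      have hne : a ≠ b := by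
        intro hab
        exact hd (by rw [hab]; exact Sym2.mk_isDiag_iff.mpr rfl)
      have ha : a ∈ s(c, d) := by rw [← Set.mem_setOf_eq (p := fun v => v ∈ s(c,d)), ← h]; simp
      have hb : b ∈ s(c, d) := by rw [← Set.mem_setOf_eq (p := fun v => v ∈ s(c,d)), ← h]; simp
      rw [Sym2.mem_iff] at ha hb
      rw [Sym2.eq_iff]
      rcases ha with rfl | rfl
      · rcases hb with rfl | rfl
        · exact absurd rfl hne
        · exact Or.inl ⟨rfl, rfl⟩
      · rcases hb with rfl | rfl
        · exact Or.inr ⟨rfl, rfl⟩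
        · exact absurd rfl hne

variable (n m : ℕ)

def T12 (k : ℕ) := {G' : SimpleGraph (Fin n) // IsIncreasing12Tree G' ∧ G'.edgeSet.ncard = k}

instance : Finite (T12 n m) := by unfold T12; infer_instance

def TBig := {G : SimpleGraph (Fin (n+1)) // IsIncreasing12Tree G ∧ G.edgeSet.ncard = m + 1}

instance : Finite (TBig n m) := by unfold TBig; infer_instance

def Ffun (hn : 1 ≤ n) :
    (Fin n × T12 n m) ⊕ (Σ p : T12 n (m-1), ↥(p.1.edgeSet)) → TBig n m
  | Sum.inl (x, ⟨G', hP, hm⟩) =>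
      ⟨extG G' {x}, by
        refine P_extG hn hP ⟨x, rfl⟩ (by rw [Set.ncard_singleton]; omega) ?_
        rintro a rfl b rfl hab
        exact absurd rfl hab, by
        rw [ncard_edgeSet_extG, hm, Set.ncard_singleton]⟩
  | Sum.inr ⟨⟨G', hP, hm⟩, ⟨e, he⟩⟩ =>
      ⟨extG G' {v | v ∈ e}, by
        obtain ⟨h1, h2, h3⟩ := edge_mem_facts he
        exact P_extG hn hP h1 (le_of_eq h2) h3, by
        obtain ⟨h1, h2, h3⟩ := edge_mem_facts he
        have hm1 : 1 ≤ m - 1 := by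
          have : 0 < G'.edgeSet.ncard := (Set.ncard_pos (Set.toFinite _)).mpr ⟨e, he⟩
          omega
        rw [ncard_edgeSet_extG, hm, h2]
        omega⟩

lemma Ffun_inj (hn : 1 ≤ n) : Function.Injective (Ffun n m hn) := by
  rintro (⟨x, ⟨G1, hP1, hm1⟩⟩ | ⟨⟨G1, hP1, hm1⟩, e1, he1⟩)
    (⟨y, ⟨G2, hP2, hm2⟩⟩ | ⟨⟨G2, hP2, hm2⟩, e2, he2⟩) h
  · have hval : extG G1 {x} = extG G2 {y} := congrArg Subtype.val h
    have hS : ({x} : Set (Fin n)) = {y} := by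
      rw [← extG_S_recover G1 {x}, ← extG_S_recover G2 {y}, hval]
    have hG : G1 = G2 := by rw [← resG_extG (G' := G1) (S := {x}), hval, resG_extG]
    subst hG
    rw [Set.singleton_eq_singleton_iff] at hS
    subst hS
    rfl
  · exfalso
    have hval : extG G1 {x} = extG G2 {v | v ∈ e2} := congrArg Subtype.val h
    have hS : ({x} : Set (Fin n)) = {v | v ∈ e2} := by
      rw [← extG_S_recover G1 {x}, ← extG_S_recover G2 {v | v ∈ e2}, hval]
    have h2 := (edge_mem_facts he2).2.1
    rw [← hS, Set.ncard_singleton] at h2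
    omega
  · exfalso
    have hval : extG G1 {v | v ∈ e1} = extG G2 {y} := congrArg Subtype.val h
    have hS : {v | v ∈ e1} = ({y} : Set (Fin n)) := by
      rw [← extG_S_recover G1 {v | v ∈ e1}, ← extG_S_recover G2 {y}, hval]
    have h2 := (edge_mem_facts he1).2.1
    rw [hS, Set.ncard_singleton] at h2
    omega
  · have hval : extG G1 {v | v ∈ e1} = extG G2 {v | v ∈ e2} := congrArg Subtype.val h
    have hS : {v | v ∈ e1} = {v | v ∈ e2} := by
      rw [← extG_S_recover G1 {v | v ∈ e1}, ← extG_S_recover G2 {v | v ∈ e2}, hval]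
    have hG : G1 = G2 := by
      rw [← resG_extG (G' := G1) (S := {v | v ∈ e1}), hval, resG_extG]
    subst hG
    have he : e1 = e2 := sym2_eq_of_set_eq (G1.not_isDiag_of_mem_edgeSet he1) hS
    subst he
    rfl

lemma Ffun_surj (hn : 1 ≤ n) : Function.Surjective (Ffun n m hn) := by
  rintro ⟨G, hP, hmG⟩
  set S : Set (Fin n) := {v : Fin n | G.Adj (Fin.last n) v.castSucc} with hSdef
  have hG : G = extG (resG G) S := extG_resG G
  have hlast : lowerNbrs G (Fin.last n) = Fin.castSucc '' S := by
    ext x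
    simp only [lowerNbrs, Set.mem_setOf_eq, Set.mem_image, hSdef]
    constructor
    · rintro ⟨hadj, hlt⟩
      rcases fin_cases' x with rfl | ⟨v, rfl⟩
      · exact absurd rfl hlt.ne
      · exact ⟨v, hadj, rfl⟩
    · rintro ⟨v, hv, rfl⟩
      exact ⟨hv, Fin.castSucc_lt_last v⟩
  have hlastval : 1 ≤ (Fin.last n).val := by
    simpa using hn
  obtain ⟨hD1, hD2, hD3⟩ := hP (Fin.last n) hlastval
  rw [hlast] at hD1 hD2 hD3
  have hSne : S.Nonempty := by
    obtain ⟨x, v, hv, rfl⟩ := hD1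
    exact ⟨v, hv⟩
  have hScard : S.ncard ≤ 2 := by
    rwa [Set.ncard_image_of_injective _ (Fin.castSucc_injective n)] at hD2
  have hPres : IsIncreasing12Tree (resG G) := P_resG hP
  have hedge : (resG G).edgeSet.ncard + S.ncard = m + 1 := by
    rw [← ncard_edgeSet_extG, ← hG, hmG]
  have hS12 : S.ncard = 1 ∨ S.ncard = 2 := by
    have : 0 < S.ncard := (Set.ncard_pos (Set.toFinite _)).mpr hSne
    omega
  rcases hS12 with h1 | h2
  · obtain ⟨x, hx⟩ := Set.ncard_eq_one.mp h1
    refine ⟨Sum.inl ⟨x, ⟨resG G, hPres, ?_⟩⟩, ?_⟩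
    · rw [hx, Set.ncard_singleton] at hedge
      omega
    · apply Subtype.ext
      show extG (resG G) {x} = G
      rw [← hx, ← hG]
  · obtain ⟨x, y, hxy, hxyS⟩ := Set.ncard_eq_two.mp h2
    have hadj : (resG G).Adj x y := by
      have hx : x.castSucc ∈ Fin.castSucc '' S := ⟨x, by rw [hxyS]; simp, rfl⟩
      have hy : y.castSucc ∈ Fin.castSucc '' S := ⟨y, by rw [hxyS]; simp, rfl⟩
      exact hD3 _ hx _ hy (by simpa [Fin.castSucc_inj] using hxy)
    have hSe : {v | v ∈ s(x, y)} = S := by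
      rw [hxyS]
      ext v
      simp [Sym2.mem_iff]
    refine ⟨Sum.inr ⟨⟨resG G, hPres, ?_⟩, ⟨s(x, y), hadj⟩⟩, ?_⟩
    · rw [h2] at hedge
      omega
    · apply Subtype.ext
      show extG (resG G) {v | v ∈ s(x, y)} = G
      rw [hSe, ← hG]

lemma combC4 (n : ℕ) (hn : 1 ≤ n) (m : ℕ) :
    numInc12Trees (n+1) (m+1) = n * numInc12Trees n m + (m-1) * numInc12Trees n (m-1) := by
  have hbij : Function.Bijective (Ffun n m hn) := ⟨Ffun_inj n m hn, Ffun_surj n m hn⟩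
  have h1 : numInc12Trees (n+1) (m+1) = Nat.card (TBig n m) := rfl
  rw [h1, ← Nat.card_congr (Equiv.ofBijective _ hbij), Nat.card_sum, Nat.card_prod]
  congr 1
  · have : Nat.card (Fin n) = n := by simp
    rw [this]
    rfl
  · letI : Fintype (T12 n (m-1)) := Fintype.ofFinite _
    letI : ∀ p : T12 n (m-1), Fintype ↥(p.1.edgeSet) := fun p => Fintype.ofFinite _
    rw [Nat.card_eq_fintype_card, Fintype.card_sigma]
    have hfib : ∀ p : T12 n (m-1), Fintype.card ↥(p.1.edgeSet) = m - 1 := by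
      intro p
      rw [← Nat.card_eq_fintype_card, Nat.card_coe_set_eq, p.2.2]
    rw [Finset.sum_congr rfl (fun p _ => hfib p), Finset.sum_const, Finset.card_univ,
      smul_eq_mul, mul_comm, ← Nat.card_eq_fintype_card]
    rfl

lemma graphs_on_one_no_edges (G : SimpleGraph (Fin 1)) : G.edgeSet = ∅ := by
  ext e
  induction e using Sym2.ind with
  | _ a b =>
    simp only [mem_edgeSet, Set.mem_empty_iff_false, iff_false]
    intro h
    exact G.ne_of_adj h (Subsingleton.elim a b)

lemma combC1 : numInc12Trees 1 0 = 1 := by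
  have : ∀ G : SimpleGraph (Fin 1), IsIncreasing12Tree G ∧ G.edgeSet.ncard = 0 := by
    intro G
    constructor
    · intro v hv
      have : v.val = 0 := by omega
      omega
    · rw [graphs_on_one_no_edges G, Set.ncard_empty]
  haveI : Unique {G : SimpleGraph (Fin 1) // IsIncreasing12Tree G ∧ G.edgeSet.ncard = 0} := {
    default := ⟨⊥, this ⊥⟩
    uniq := by
      rintro ⟨G, hG⟩
      apply Subtype.ext
      show G = ⊥
      ext a b
      simp only [SimpleGraph.bot_adj, iff_false]
      intro h
      exact G.ne_of_adj h (Subsingleton.elim a b) }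
  rw [numInc12Trees, Nat.card_unique]

lemma combC2 (m : ℕ) (hm : 1 ≤ m) : numInc12Trees 1 m = 0 := by
  rw [numInc12Trees]
  haveI : IsEmpty {G : SimpleGraph (Fin 1) // IsIncreasing12Tree G ∧ G.edgeSet.ncard = m} := by
    constructor
    rintro ⟨G, _, hmG⟩
    rw [graphs_on_one_no_edges G, Set.ncard_empty] at hmG
    omega
  rw [Nat.card_eq_zero]
  exact Or.inl this

lemma combC3 (n : ℕ) (hn : 1 ≤ n) : numInc12Trees (n+1) 0 = 0 := by
  rw [numInc12Trees]
  haveI : IsEmpty {G : SimpleGraph (Fin (n+1)) // IsIncreasing12Tree G ∧ G.edgeSet.ncard = 0} := by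
    constructor
    rintro ⟨G, hP, hmG⟩
    have hv : (1 : ℕ) ≤ (⟨1, by omega⟩ : Fin (n+1)).val := le_refl 1
    obtain ⟨⟨x, hx1, _⟩, _, _⟩ := hP ⟨1, by omega⟩ hv
    have : s(⟨1, by omega⟩, x) ∈ G.edgeSet := hx1
    have hne : G.edgeSet.Nonempty := ⟨_, this⟩
    rw [Set.ncard_eq_zero (Set.toFinite _)] at hmG
    rw [hmG] at hne
    exact Set.not_nonempty_empty hne
  rw [Nat.card_eq_zero]
  exact Or.inl this

end Ext

lemma combC5 (n : ℕ) (hn : 1 ≤ n) : ∀ m : ℕ, 2 * n - 3 < m → numInc12Trees n m = 0 := by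
  induction n, hn using Nat.le_induction with
  | base => exact fun m hm => combC2 m (by omega)
  | succ n hn IH =>
    intro m hm
    rcases Nat.eq_zero_or_pos m with rfl | hm1
    · exact combC3 n hn
    · obtain ⟨m', rfl⟩ : ∃ m', m = m' + 1 := ⟨m - 1, by omega⟩
      rw [combC4 n hn m']
      have h1 : numInc12Trees n m' = 0 := IH m' (by omega)
      rcases Nat.lt_or_ge m' 2 with hm2 | hm2
      · have : m' - 1 = 0 := by omega
        rw [h1, this, mul_zero, zero_mul, add_zero]
      · have h2 : numInc12Trees n (m'-1) = 0 := IH (m'-1) (by omega)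
        rw [h1, h2, mul_zero, mul_zero, add_zero]

noncomputable def Vs : PowerSeries ℚ := (1+X)⁻¹

noncomputable def Sn (n : ℕ) : PowerSeries ℚ :=
  ∑ m ∈ Finset.range (2*n), C (R := ℚ) (numInc12Trees n m : ℚ) * Vs ^ m

noncomputable def An (n : ℕ) : PowerSeries ℚ :=
  PowerSeries.coeff (R := PowerSeries ℚ) n Dser

lemma An_eq (n : ℕ) : An n = if n = 0 then 0 else C (R := ℚ) ((n.factorial:ℚ))⁻¹ * Sn n := by
  rw [An, Dser, coeff_mk, Sn, Vs]

lemma hVunit : (1 + X : PowerSeries ℚ) * Vs = 1 := by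
  rw [Vs]
  apply PowerSeries.mul_inv_cancel
  simp

lemma dV : d⁄dX ℚ Vs = -(Vs^2) := by
  rw [Vs, derivative_inv']
  simp

lemma dVpow (m : ℕ) : d⁄dX ℚ (Vs^m) = -((m:ℚ) • Vs^(m+1)) := by
  cases m with
  | zero => simp
  | succ m =>
    rw [Derivation.leibniz_pow, dV, Nat.add_sub_cancel, smul_eq_mul, ← Nat.cast_smul_eq_nsmul ℚ]
    push_cast
    rw [← smul_neg]
    congr 1
    rw [mul_neg, ← pow_add]

lemma dCmul (a : ℚ) (f : PowerSeries ℚ) : d⁄dX ℚ (C (R := ℚ) a * f) = C (R := ℚ) a * d⁄dX ℚ f := by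
  rw [Derivation.leibniz, derivative_C, smul_eq_mul, smul_eq_mul, mul_zero, add_zero]

lemma Srec (n : ℕ) (hn : 1 ≤ n) :
    (1 + X) * Sn (n+1) = (n:ℚ) • Sn n - d⁄dX ℚ (Sn n) := by
  have hterm : ∀ (a : ℚ) (m : ℕ), (1+X) * (C (R := ℚ) a * Vs^(m+1)) = C (R := ℚ) a * Vs^m := by
    intro a m
    rw [pow_succ']
    calc (1+X) * (C (R := ℚ) a * (Vs * Vs^m)) = ((1+X) * Vs) * (C (R := ℚ) a * Vs^m) := by ring
    _ = C (R := ℚ) a * Vs^m := by rw [hVunit, one_mul]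
  have hpeel : Sn (n+1) = ∑ m ∈ Finset.range (2*n+1),
      C (R := ℚ) (numInc12Trees (n+1) (m+1) : ℚ) * Vs^(m+1) := by
    rw [Sn, show 2*(n+1) = (2*n+1)+1 by ring, Finset.sum_range_succ']
    rw [combC3 n hn]
    simp
  rw [hpeel, Finset.mul_sum]
  have h1 : ∀ m ∈ Finset.range (2*n+1), (1+X) * (C (R := ℚ) (numInc12Trees (n+1) (m+1) : ℚ) * Vs^(m+1))
      = (n:ℚ) • (C (R := ℚ) (numInc12Trees n m : ℚ) * Vs^m)
        + (C (R := ℚ) (((m-1 : ℕ):ℚ) * (numInc12Trees n (m-1) : ℚ)) * Vs^m) := by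
    intro m _
    rw [hterm, combC4 n hn m]
    push_cast [Nat.cast_mul]
    rw [map_add, add_mul, map_mul, smul_eq_C_mul, map_mul]
    ring
  rw [Finset.sum_congr rfl h1, Finset.sum_add_distrib, ← Finset.smul_sum]
  have h2 : ∑ m ∈ Finset.range (2*n+1), C (R := ℚ) (numInc12Trees n m : ℚ) * Vs^m = Sn n := by
    rw [Finset.sum_range_succ, combC5 n hn (2*n) (by omega), Sn]
    simp
  have h3 : ∑ m ∈ Finset.range (2*n+1), C (R := ℚ) (((m-1:ℕ):ℚ) * (numInc12Trees n (m-1) : ℚ)) * Vs^m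
      = - d⁄dX ℚ (Sn n) := by
    rw [Finset.sum_range_succ']
    have hz : C (R := ℚ) (((0-1:ℕ):ℚ) * (numInc12Trees n (0-1) : ℚ)) * Vs^0 = 0 := by
      norm_num
    rw [hz, add_zero, Sn, map_sum, ← Finset.sum_neg_distrib]
    refine Finset.sum_congr rfl fun m _ => ?_
    rw [dCmul, dVpow, Nat.add_sub_cancel, map_mul, smul_eq_C_mul]
    ring
  rw [h2, h3]
  ring

lemma Arec (n : ℕ) (hn : 1 ≤ n) :
    (1 + X) * (((n:ℚ)+1) • An (n+1)) = (n:ℚ) • An n - d⁄dX ℚ (An n) := by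
  rw [An_eq, An_eq, if_neg (by omega), if_neg (by omega)]
  have hfac : ((n:ℚ)+1) * ((((n+1).factorial:ℚ))⁻¹) = ((n.factorial:ℚ))⁻¹ := by
    have h1 : ((n.factorial:ℚ)) ≠ 0 := fact_cast_ne n
    have h2 : ((n:ℚ)+1) ≠ 0 := by positivity
    rw [Nat.factorial_succ]
    push_cast
    field_simp
  rw [dCmul]
  have hL : ((n:ℚ)+1) • (C (R := ℚ) ((((n+1).factorial:ℚ))⁻¹) * Sn (n+1))
      = C (R := ℚ) (((n.factorial:ℚ))⁻¹) * Sn (n+1) := by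
    rw [smul_eq_C_mul, ← mul_assoc, ← map_mul, hfac]
  rw [hL]
  calc (1+X) * (C (R := ℚ) (((n.factorial:ℚ))⁻¹) * Sn (n+1))
      = C (R := ℚ) (((n.factorial:ℚ))⁻¹) * ((1+X) * Sn (n+1)) := by ring
    _ = C (R := ℚ) (((n.factorial:ℚ))⁻¹) * ((n:ℚ) • Sn n - d⁄dX ℚ (Sn n)) := by rw [Srec n hn]
    _ = (n:ℚ) • (C (R := ℚ) (((n.factorial:ℚ))⁻¹) * Sn n) - C (R := ℚ) (((n.factorial:ℚ))⁻¹) * d⁄dX ℚ (Sn n) := by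
        rw [smul_eq_C_mul, smul_eq_C_mul, mul_sub]
        ring

lemma A1_eq : An 1 = 1 := by
  rw [An_eq, if_neg one_ne_zero]
  have hS : Sn 1 = 1 := by
    rw [Sn, show 2*1 = 2 by norm_num, Finset.sum_range_succ, Finset.sum_range_succ,
      Finset.sum_range_zero, combC1, combC2 1 le_rfl]
    simp
  rw [hS, Nat.factorial_one]
  simp

lemma main_ge_one (n : ℕ) (hn : 1 ≤ n) : An n = Bn n := by
  induction n, hn using Nat.le_induction with
  | base => rw [A1_eq, B1_eq]
  | succ n hn IH =>
    have h : (1 + X) * (((n:ℚ)+1) • An (n+1)) = (1 + X) * (((n:ℚ)+1) • Bn (n+1)) := by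
      rw [Arec n hn, IH, Brec n]
    have h1 : (1 + X : PowerSeries ℚ) ≠ 0 := by
      intro hc
      have := congrArg (constantCoeff (R := ℚ)) hc
      simp at this
    have h2 := mul_left_cancel₀ h1 h
    exact smul_right_injective (PowerSeries ℚ) (show ((n:ℚ)+1) ≠ 0 by positivity) h2

theorem egf_main :
    Dser = substBivar cayleyEgf gSub +
      PowerSeries.C (R := PowerSeries ℚ)
        (PowerSeries.X + PowerSeries.C (R := ℚ) (1 / 2) * PowerSeries.X ^ 2) := by
  refine PowerSeries.ext fun n => ?_
  rw [map_add, PowerSeries.coeff_C]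
  show An n = Bn n + _
  rcases Nat.eq_zero_or_pos n with rfl | hn
  · rw [if_pos rfl, An_eq, if_pos rfl, B0_eq]
    ring
  · rw [if_neg (by omega), add_zero]
    exact main_ge_one n hn

theorem egf_increasing12Trees_closed_form :
    (∀ n : ℕ, 1 ≤ n → ∀ m : ℕ, 2 * n - 3 < m → numInc12Trees n m = 0) ∧
    Dser = substBivar cayleyEgf gSub +
      PowerSeries.C (R := PowerSeries ℚ)
        (PowerSeries.X + PowerSeries.C (R := ℚ) (1 / 2) * PowerSeries.X ^ 2) := by
  constructor
  · exact fun n hn m hm => combC5 n hn m hm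
  · exact egf_main
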